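/- Let d₁, d₂ ∈ D and ζ₁, ζ₂ be w_pvm-PCL formulas over a left-⊕-distributive pv-monoid D with ⊗ commutative and associative. Then (d₁ ⊗ ζ₁) ⊎ (d₂ ⊗ ζ₂) ≡ d₁ ⊗ d₂ ⊗ (ζ₁ ⊎ ζ₂). -/

import Mathlib

/-- Syntax of propositional interaction logic (PIL) over a set of ports `P`. -/
inductive PIL (P : Type) where
  | tt : PIL P
  | port : P → PIL P
  | neg : PIL P → PIL P
  | disj : PIL P → PIL P → PIL P

/-- Satisfaction of a PIL formula by an interaction (a finite set of ports). -/
def PILsat {P : Type} (α : Finset P) : PIL P → Prop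
  | .tt => True
  | .port p => p ∈ α
  | .neg φ => ¬ PILsat α φ
  | .disj φ ψ => PILsat α φ ∨ PILsat α ψ

/-- Syntax of propositional configuration logic (PCL) over ports `P`. -/
inductive PCL (P : Type) where
  | tt : PCL P
  | pil : PIL P → PCL P
  | neg : PCL P → PCL P
  | union : PCL P → PCL P → PCL P
  | coal : PCL P → PCL P → PCL P

/-- Satisfaction of a PCL formula by a configuration (a finite set of interactions). -/
def PCLsat {P : Type} [DecidableEq P] : Finset (Finset P) → PCL P → Prop
  | _, .tt => True
  | γ, .pil φ => ∀ a ∈ γ, PILsat a φ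
  | γ, .neg f => ¬ PCLsat γ f
  | γ, .union f g => PCLsat γ f ∨ PCLsat γ g
  | γ, .coal f g => ∃ γ₁ γ₂ : Finset (Finset P),
      γ₁.Nonempty ∧ γ₂.Nonempty ∧ γ₁ ∪ γ₂ = γ ∧ PCLsat γ₁ f ∧ PCLsat γ₂ g

/-- Syntax of weighted PCL over ports `P` and a pv-monoid with carrier `D`. -/
inductive WPCL (P D : Type) where
  | const : D → WPCL P D
  | pcl : PCL P → WPCL P D
  | oplus : WPCL P D → WPCL P D → WPCL P D
  | otimes : WPCL P D → WPCL P D → WPCL P D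
  | coal : WPCL P D → WPCL P D → WPCL P D
  | star : WPCL P D → WPCL P D

open scoped Classical in
/-- Semantics of weighted PCL formulas.  The pv-monoid is given by an additive
commutative monoid `D` (the `⊕` operation and `0`), a multiplication `ot` (`⊗`),
a unit `one` and a symmetric valuation function `val` on nonempty multisets. -/
noncomputable def sem {P D : Type} [DecidableEq P] [AddCommMonoid D]
    (ot : D → D → D) (one : D) (val : Multiset D → D) :
    WPCL P D → Finset (Finset P) → D
  | .const d, _ => d
  | .pcl f, γ => if PCLsat γ f then one else 0
  | .oplus ζ₁ ζ₂, γ => sem ot one val ζ₁ γ + sem ot one val ζ₂ γ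
  | .otimes ζ₁ ζ₂, γ => ot (sem ot one val ζ₁ γ) (sem ot one val ζ₂ γ)
  | .coal ζ₁ ζ₂, γ =>
      ∑ p ∈ (γ.powerset ×ˢ γ.powerset).filter
        (fun p => p.1.Nonempty ∧ p.2.Nonempty ∧ Disjoint p.1 p.2 ∧ p.1 ∪ p.2 = γ),
        ot (sem ot one val ζ₁ p.1) (sem ot one val ζ₂ p.2)
  | .star ζ, γ =>
      ∑ Q ∈ γ.powerset.powerset.filter
        (fun Q => Q.Nonempty ∧ (∀ x ∈ Q, x.Nonempty) ∧
          (∀ x ∈ Q, ∀ y ∈ Q, x ≠ y → Disjoint x y) ∧ Q.sup id = γ),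
        val (Q.val.map (fun x => sem ot one val ζ x))

/-- `γ` is a configuration: a nonempty set of (nonempty) interactions. -/
def Config {P : Type} (γ : Finset (Finset P)) : Prop :=
  γ.Nonempty ∧ ∀ a ∈ γ, a.Nonempty

/-- The axioms of an (idempotent) product valuation monoid, on top of the
additive commutative monoid structure `(D, +, 0)`. -/
structure IsPVM (D : Type) [AddCommMonoid D]
    (ot : D → D → D) (one : D) (val : Multiset D → D) : Prop where
  zero_ot : ∀ d, ot 0 d = 0
  ot_zero : ∀ d, ot d 0 = 0
  one_ot : ∀ d, ot one d = d
  ot_one : ∀ d, ot d one = d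
  val_singleton : ∀ d, val {d} = d
  val_zero : ∀ m : Multiset D, (0 : D) ∈ m → val m = 0
  val_one : ∀ n : ℕ, 1 ≤ n → val (Multiset.replicate n one) = one
  idem : ∀ d : D, d + d = d

/-- The wclosure `∼ζ := ζ ⊕ (ζ ⊎ 1)` of a weighted PCL formula. -/
def wclosure {P D : Type} (one : D) (ζ : WPCL P D) : WPCL P D :=
  ζ.oplus (ζ.coal (.const one))

theorem stmt17 {P D : Type} [DecidableEq P] [AddCommMonoid D]
    (ot : D → D → D) (one : D) (val : Multiset D → D)
    (hpvm : IsPVM D ot one val)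
    (hld : ∀ a b c : D, ot a (b + c) = ot a b + ot a c)
    (hcomm : ∀ a b : D, ot a b = ot b a)
    (hassoc : ∀ a b c : D, ot (ot a b) c = ot a (ot b c))
    (d₁ d₂ : D) (ζ₁ ζ₂ : WPCL P D) (γ : Finset (Finset P)) (hγ : Config γ) :
    sem ot one val (((WPCL.const d₁).otimes ζ₁).coal ((WPCL.const d₂).otimes ζ₂)) γ
      = sem ot one val ((WPCL.const d₁).otimes ((WPCL.const d₂).otimes (ζ₁.coal ζ₂))) γ := by
  have hdist : ∀ (d : D) (s : Finset (Finset (Finset P) × Finset (Finset P)))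
      (f : Finset (Finset P) × Finset (Finset P) → D),
      ot d (∑ x ∈ s, f x) = ∑ x ∈ s, ot d (f x) := by
    intro d s f
    induction s using Finset.induction with
    | empty => simp [hpvm.ot_zero]
    | insert a s h ih => rw [Finset.sum_insert h, Finset.sum_insert h, hld, ih]
  simp only [sem, hdist]
  apply Finset.sum_congr rfl
  intro p _
  rw [hassoc, hcomm (sem ot one val ζ₁ p.1), hassoc, hcomm (sem ot one val ζ₂ p.2)]
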